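/- Let φ be an orthonormal N-frame, η ∈ T_φ, and R := (φ+η)·(I_N + ⟦η,η⟧)^{-1/2}. Then for every orthonormal N-frame ξ : Fin N → H₀ one has ‖R − (φ+η)‖_H ≤ ‖ξ − (φ+η)‖_H; that is, the polar-decomposition-based retraction is a nearest-point projection of φ+η onto the set of orthonormal N-frames with respect to the H-norm. -/

import Mathlib

open scoped RealInnerProductSpace

/-- The outer product `⟦v,w⟧ ∈ ℝ^{N×N}` of two tuples, with entries `⟨v i, w j⟩`. -/
noncomputable def outerProd {N : ℕ} {H₀ : Type*} [NormedAddCommGroup H₀]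
    [InnerProductSpace ℝ H₀] (v w : Fin N → H₀) : Matrix (Fin N) (Fin N) ℝ :=
  Matrix.of fun i j => ⟪v i, w j⟫

/-- Multiplication of a tuple by a matrix from the right: `(vS)_j = Σ_i S_{ij} v_i`. -/
def smulMat {N : ℕ} {H₀ : Type*} [AddCommGroup H₀] [Module ℝ H₀]
    (v : Fin N → H₀) (S : Matrix (Fin N) (Fin N) ℝ) : Fin N → H₀ :=
  fun j => ∑ i, S i j • v i

/-- The inner product `(v,w)_H = Σ_j ⟨v_j, w_j⟩ = tr⟦v,w⟧`. -/
noncomputable def innerH {N : ℕ} {H₀ : Type*} [NormedAddCommGroup H₀]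
    [InnerProductSpace ℝ H₀] (v w : Fin N → H₀) : ℝ :=
  ∑ j, ⟪v j, w j⟫

/-- The `H`-norm `‖v‖_H = (Σ_j ⟨v_j, v_j⟩)^{1/2}` of a tuple. -/
noncomputable def normH {N : ℕ} {H₀ : Type*} [NormedAddCommGroup H₀]
    [InnerProductSpace ℝ H₀] (v : Fin N → H₀) : ℝ :=
  Real.sqrt (innerH v v)

open Matrix
open scoped MatrixOrder

section aux
variable {N : ℕ} {H₀ : Type*} [NormedAddCommGroup H₀] [InnerProductSpace ℝ H₀]

lemma innerH_eq_trace (v w : Fin N → H₀) : innerH v w = (outerProd v w).trace := rfl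

lemma inner_sum_ortho (u : Fin N → H₀) (hu : outerProd u u = 1) (c d : Fin N → ℝ) :
    ⟪∑ j, c j • u j, ∑ i, d i • u i⟫ = ∑ j, c j * d j := by
  have h : ∀ i j, ⟪u i, u j⟫ = (1 : Matrix (Fin N) (Fin N) ℝ) i j := fun i j => by
    rw [← hu]; rfl
  rw [sum_inner]
  simp_rw [inner_sum, real_inner_smul_left, real_inner_smul_right, h, Matrix.one_apply]
  simp [mul_ite, Finset.sum_ite_eq]

lemma outerProd_smul_left (v w : Fin N → H₀) (A : Matrix (Fin N) (Fin N) ℝ) :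
    outerProd (smulMat v A) w = Aᵀ * outerProd v w := by
  ext i j
  simp [outerProd, smulMat, Matrix.mul_apply, sum_inner, real_inner_smul_left]

lemma outerProd_smul_right (v w : Fin N → H₀) (A : Matrix (Fin N) (Fin N) ℝ) :
    outerProd v (smulMat w A) = outerProd v w * A := by
  ext i j
  simp [outerProd, smulMat, Matrix.mul_apply, inner_sum, real_inner_smul_right, mul_comm]

lemma outerProd_add_left (v w u : Fin N → H₀) :
    outerProd (v + w) u = outerProd v u + outerProd w u := by
  ext i j; simp [outerProd, inner_add_left]

lemma outerProd_add_right (v w u : Fin N → H₀) :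
    outerProd u (v + w) = outerProd u v + outerProd u w := by
  ext i j; simp [outerProd, inner_add_right]

lemma smulMat_smulMat (v : Fin N → H₀) (A B : Matrix (Fin N) (Fin N) ℝ) :
    smulMat (smulMat v A) B = smulMat v (A * B) := by
  funext j
  simp only [smulMat, Matrix.mul_apply, Finset.smul_sum, Finset.sum_smul, smul_smul]
  rw [Finset.sum_comm]
  exact Finset.sum_congr rfl fun k _ => Finset.sum_congr rfl fun i _ => by rw [mul_comm]

lemma smulMat_one (v : Fin N → H₀) : smulMat v 1 = v := by
  funext j
  simp [smulMat, Matrix.one_apply, ite_smul]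

lemma innerH_smulMat_right (x p : Fin N → H₀) (T : Matrix (Fin N) (Fin N) ℝ) :
    innerH x (smulMat p T) = innerH (smulMat x Tᵀ) p := by
  simp only [innerH, smulMat, inner_sum, sum_inner, real_inner_smul_right,
    real_inner_smul_left, Matrix.transpose_apply]
  exact Finset.sum_comm

lemma gram_posSemidef (η : Fin N → H₀) : (outerProd η η).PosSemidef := by
  apply Matrix.PosSemidef.of_dotProduct_mulVec_nonneg
  · ext i j
    simp [outerProd, Matrix.conjTranspose_apply, real_inner_comm]
  · intro x
    have h : star x ⬝ᵥ ((outerProd η η) *ᵥ x) = ⟪∑ i, x i • η i, ∑ j, x j • η j⟫ := by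
      simp only [sum_inner, inner_sum, real_inner_smul_left, real_inner_smul_right,
        dotProduct, Matrix.mulVec, Pi.star_apply, star_trivial, outerProd,
        Matrix.of_apply, Finset.mul_sum]
      exact Finset.sum_congr rfl fun i _ => Finset.sum_congr rfl fun j _ => by rw [real_inner_comm]; ring
    rw [h]
    exact real_inner_self_nonneg

lemma key_ineq (ξ w : Fin N → H₀) (hξ : outerProd ξ ξ = 1) (hw : outerProd w w = 1)
    (T : Matrix (Fin N) (Fin N) ℝ) (hT : Tᵀ = T) :
    innerH ξ (smulMat w (T * T)) ≤ (T * T).trace := by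
  rw [← smulMat_smulMat, innerH_smulMat_right, hT]
  have hterm : ∀ k, ⟪(smulMat ξ T) k, (smulMat w T) k⟫ ≤ (T * T) k k := by
    intro k
    have ha : ⟪(smulMat ξ T) k, (smulMat ξ T) k⟫ = ∑ i, T i k * T i k :=
      inner_sum_ortho ξ hξ _ _
    have hb : ⟪(smulMat w T) k, (smulMat w T) k⟫ = ∑ i, T i k * T i k :=
      inner_sum_ortho w hw _ _
    have hTT : (T * T) k k = ∑ i, T i k * T i k := by
      rw [Matrix.mul_apply]
      refine Finset.sum_congr rfl fun i _ => ?_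
      have hik : T k i = T i k := by simpa using congrFun (congrFun hT i) k
      rw [hik]
    have hnn : (0:ℝ) ≤ ∑ i, T i k * T i k :=
      Finset.sum_nonneg fun i _ => mul_self_nonneg _
    calc ⟪(smulMat ξ T) k, (smulMat w T) k⟫ ≤ ‖(smulMat ξ T) k‖ * ‖(smulMat w T) k‖ :=
          real_inner_le_norm _ _
      _ = Real.sqrt (∑ i, T i k * T i k) * Real.sqrt (∑ i, T i k * T i k) := by
          rw [norm_eq_sqrt_real_inner, norm_eq_sqrt_real_inner, ha, hb]
      _ = (T * T) k k := by rw [Real.mul_self_sqrt hnn, hTT]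
  calc innerH (smulMat ξ T) (smulMat w T) = ∑ k, ⟪(smulMat ξ T) k, (smulMat w T) k⟫ := rfl
    _ ≤ ∑ k, (T * T) k k := Finset.sum_le_sum fun k _ => hterm k
    _ = (T * T).trace := rfl

lemma innerH_sub_self (a c : Fin N → H₀) :
    innerH (a - c) (a - c) = innerH a a - 2 * innerH a c + innerH c c := by
  simp only [innerH, Pi.sub_apply, real_inner_sub_sub_self]
  rw [Finset.sum_add_distrib, Finset.sum_sub_distrib, Finset.mul_sum]

end aux

/-- the polar-decomposition-based retraction
`R = (φ+η)·(I + ⟦η,η⟧)^{-1/2}` is a nearest-point projection of `φ+η` onto the set of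
orthonormal `N`-frames with respect to the `H`-norm. The square root `(I + ⟦η,η⟧)^{1/2}`
is represented by the (unique) symmetric positive semidefinite matrix `S` with
`S * S = I + ⟦η,η⟧`. -/
theorem polar_retraction_is_projection {N : ℕ} (hN : 1 ≤ N) {H₀ : Type*}
    [NormedAddCommGroup H₀] [InnerProductSpace ℝ H₀]
    (φ η : Fin N → H₀) (hφ : outerProd φ φ = 1)
    (hη : outerProd η φ + outerProd φ η = 0)
    (S : Matrix (Fin N) (Fin N) ℝ) (hS : S.PosSemidef)
    (hSsq : S * S = 1 + outerProd η η) :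
    ∀ ξ : Fin N → H₀, outerProd ξ ξ = 1 →
      normH (smulMat (φ + η) S⁻¹ - (φ + η)) ≤ normH (ξ - (φ + η)) := by

  intro ξ hξ
  set v : Fin N → H₀ := φ + η with hv
  have hvv : outerProd v v = S * S := by
    rw [hSsq, hv, outerProd_add_left, outerProd_add_right, outerProd_add_right, hφ]
    have : outerProd φ η = -outerProd η φ := by
      have := hη; linear_combination (norm := abel) this
    rw [this]
    abel
  have hPD : (1 + outerProd η η).PosDef :=
    Matrix.PosDef.one.add_posSemidef (gram_posSemidef η)
  have hdet : IsUnit S.det := by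
    have hdd : S.det * S.det = (1 + outerProd η η).det := by
      rw [← Matrix.det_mul, hSsq]
    have hpos := hPD.det_pos
    refine isUnit_iff_ne_zero.mpr fun h => ?_
    rw [h, mul_zero] at hdd
    rw [← hdd] at hpos
    exact lt_irrefl 0 hpos
  have hSymm : Sᵀ = S := by
    ext i j
    simpa using congrFun (congrFun hS.1 i) j
  have hSinv : S⁻¹ * S = 1 := Matrix.nonsing_inv_mul S hdet
  have hinvS : S * S⁻¹ = 1 := Matrix.mul_nonsing_inv S hdet
  have hSinvT : S⁻¹ᵀ = S⁻¹ := by rw [Matrix.transpose_nonsing_inv, hSymm]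
  set w : Fin N → H₀ := smulMat v S⁻¹ with hwdef
  have hw : outerProd w w = 1 := by
    rw [hwdef, outerProd_smul_left, outerProd_smul_right, hvv, hSinvT,
      Matrix.mul_assoc, hinvS, Matrix.mul_one, hSinv]
  have hvw : v = smulMat w S := by
    rw [hwdef, smulMat_smulMat, hSinv, smulMat_one]
  set T := CFC.sqrt S with hTdef
  have hTT : T * T = S := CFC.sqrt_mul_sqrt_self S hS.nonneg
  have hTsymm : Tᵀ = T := by
    ext i j
    simpa using congrFun (congrFun (CFC.sqrt_nonneg S).posSemidef.1 i) j
  have h1 : innerH ξ v ≤ S.trace := by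
    calc innerH ξ v = innerH ξ (smulMat w (T * T)) := by rw [hTT, ← hvw]
      _ ≤ (T * T).trace := key_ineq ξ w hξ hw T hTsymm
      _ = S.trace := by rw [hTT]
  have h2 : innerH w v = S.trace := by
    rw [innerH_eq_trace, hwdef, outerProd_smul_left, hvv, hSinvT, ← Matrix.mul_assoc,
      hSinv, Matrix.one_mul]
  have hξN : innerH ξ ξ = (N : ℝ) := by
    rw [innerH_eq_trace, hξ, Matrix.trace_one]; simp
  have hwN : innerH w w = (N : ℝ) := by
    rw [innerH_eq_trace, hw, Matrix.trace_one]; simp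
  have hfinal : innerH (w - v) (w - v) ≤ innerH (ξ - v) (ξ - v) := by
    rw [innerH_sub_self, innerH_sub_self, hξN, hwN, h2]
    linarith [h1]
  exact Real.sqrt_le_sqrt hfinal
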